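/- For every integer k ≥ 1 and every integer s ≥ 1, any k-uniform [1,s]-almost intersecting multihypergraph has at most s·(2k choose k) edges (counted with multiplicity). -/

import Mathlib

open Finset Equiv

namespace AX

noncomputable section
open scoped Classical

variable {n : ℕ}

def firstk (N k : ℕ) : Finset (Fin N) := Finset.univ.filter fun i => (i : ℕ) < k

lemma card_firstk (N k : ℕ) (h : k ≤ N) : (firstk N k).card = k := by
  have he : firstk N k = Finset.attachFin (Finset.range k)
      (fun m hm => lt_of_lt_of_le (Finset.mem_range.mp hm) h) := by
    ext i; simp [firstk, Finset.mem_attachFin]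
  rw [he, Finset.card_attachFin, Finset.card_range]

variable (k : ℕ)

def bk (S : Finset (Fin n)) (hS : S.card = 2 * k) : Finset (Fin n) :=
  (firstk (2 * k) k).image fun i => ((S.orderIsoOfFin hS i : Fin n))

lemma bk_subset (S : Finset (Fin n)) (hS : S.card = 2 * k) : bk k S hS ⊆ S := by
  intro x hx
  rw [bk, Finset.mem_image] at hx
  obtain ⟨i, _, rfl⟩ := hx
  exact (S.orderIsoOfFin hS i).2

lemma bk_card (S : Finset (Fin n)) (hS : S.card = 2 * k) : (bk k S hS).card = k := by
  rw [bk, Finset.card_image_of_injective _ (fun i j hij => by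
    exact (S.orderIsoOfFin hS).injective (Subtype.ext hij))]
  exact card_firstk _ _ (by omega)

lemma bk_lt (S : Finset (Fin n)) (hS : S.card = 2 * k) {x y : Fin n}
    (hx : x ∈ bk k S hS) (hyS : y ∈ S) (hy : y ∉ bk k S hS) : x < y := by
  rw [bk, Finset.mem_image] at hx
  obtain ⟨i, hi, rfl⟩ := hx
  set j := (S.orderIsoOfFin hS).symm ⟨y, hyS⟩ with hj
  have hyj : y = ((S.orderIsoOfFin hS j : Fin n)) := by rw [hj]; simp
  have hjk : ¬ ((j : ℕ) < k) := by
    intro hc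
    apply hy
    rw [bk, Finset.mem_image]
    exact ⟨j, by simp [firstk, hc], hyj.symm⟩
  have hij : i < j := by
    rw [firstk, Finset.mem_filter] at hi
    have : (i : ℕ) < k := hi.2
    exact Fin.lt_def.mpr (by omega)
  have := (S.orderIsoOfFin hS).strictMono hij
  rw [hyj]
  exact this

lemma subtypeCongr_apply_pos {β : Type*} {p q : β → Prop} [DecidablePred p] [DecidablePred q]
    (e : {x // p x} ≃ {x // q x}) (f : {x // ¬ p x} ≃ {x // ¬ q x}) {x : β} (h : p x) :
    Equiv.subtypeCongr e f x = ↑(e ⟨x, h⟩) := by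
  simp [Equiv.subtypeCongr, Equiv.sumCompl_symm_apply_of_pos h]

lemma subtypeCongr_apply_neg {β : Type*} {p q : β → Prop} [DecidablePred p] [DecidablePred q]
    (e : {x // p x} ≃ {x // q x}) (f : {x // ¬ p x} ≃ {x // ¬ q x}) {x : β} (h : ¬ p x) :
    Equiv.subtypeCongr e f x = ↑(f ⟨x, h⟩) := by
  simp [Equiv.subtypeCongr, Equiv.sumCompl_symm_apply_of_neg h]

lemma card_subfilter (S U : Finset (Fin n)) (hU : U ⊆ S) :
    (Finset.univ.filter fun x : ↥S => (x : Fin n) ∈ U).card = U.card := by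
  apply Finset.card_bij (fun (x : ↥S) _ => (x : Fin n))
  · intro a ha; exact (Finset.mem_filter.mp ha).2
  · intro a _ b _ h; exact Subtype.ext h
  · intro b hb
    exact ⟨⟨b, hU hb⟩, by simp [hb], rfl⟩

section Move

def inT (S T : Finset (Fin n)) : Finset ↥S := Finset.univ.filter fun x => (x : Fin n) ∈ T

def inB (S : Finset (Fin n)) (hS : S.card = 2 * k) : Finset ↥S :=
  Finset.univ.filter fun x => (x : Fin n) ∈ bk k S hS

lemma card_inT (S T : Finset (Fin n)) (hT : T ⊆ S) (hTk : T.card = k) :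
    (inT S T).card = k := by rw [inT, card_subfilter S T hT, hTk]

lemma card_inB (S : Finset (Fin n)) (hS : S.card = 2 * k) : (inB k S hS).card = k := by
  rw [inB, card_subfilter S _ (bk_subset k S hS), bk_card]

def eIn (S T : Finset (Fin n)) (hS : S.card = 2 * k) (hT : T ⊆ S) (hTk : T.card = k) :
    {x : ↥S // x ∈ inT S T} ≃ {x : ↥S // x ∈ inB k S hS} :=
  Fintype.equivOfCardEq (by
    rw [Fintype.card_coe, Fintype.card_coe, card_inT k S T hT hTk, card_inB])

def eOut (S T : Finset (Fin n)) (hS : S.card = 2 * k) (hT : T ⊆ S) (hTk : T.card = k) :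
    {x : ↥S // ¬ x ∈ inT S T} ≃ {x : ↥S // ¬ x ∈ inB k S hS} :=
  (Equiv.subtypeEquivRight (fun x => (Finset.mem_compl (s := inT S T)).symm)).trans
    ((Fintype.equivOfCardEq (by
      rw [Fintype.card_coe, Fintype.card_coe, Finset.card_compl, Finset.card_compl,
        card_inT k S T hT hTk, card_inB])).trans
      (Equiv.subtypeEquivRight (fun x => Finset.mem_compl (s := inB k S hS))))

def eS (S T : Finset (Fin n)) (hS : S.card = 2 * k) (hT : T ⊆ S) (hTk : T.card = k) :
    Equiv.Perm ↥S := Equiv.subtypeCongr (eIn k S T hS hT hTk) (eOut k S T hS hT hTk)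

def moveAux (S T : Finset (Fin n)) (hS : S.card = 2 * k) (hT : T ⊆ S) (hTk : T.card = k) :
    Equiv.Perm (Fin n) :=
  Equiv.Perm.subtypeCongr (eS k S T hS hT hTk) (Equiv.refl {x : Fin n // ¬ x ∈ S})

variable (S T : Finset (Fin n)) (hS : S.card = 2 * k) (hT : T ⊆ S) (hTk : T.card = k)

lemma moveAux_mem_bk {x : Fin n} (hx : x ∈ T) :
    moveAux k S T hS hT hTk x ∈ bk k S hS := by
  have hxS : x ∈ S := hT hx
  rw [moveAux, Equiv.Perm.subtypeCongr.left_apply _ _ hxS]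
  have hmem : (⟨x, hxS⟩ : ↥S) ∈ inT S T := by simp [inT, hx]
  rw [eS, subtypeCongr_apply_pos _ _ hmem]
  exact (Finset.mem_filter.mp (eIn k S T hS hT hTk ⟨⟨x, hxS⟩, hmem⟩).2).2

lemma moveAux_mem_S {x : Fin n} (hxS : x ∈ S) :
    moveAux k S T hS hT hTk x ∈ S := by
  rw [moveAux, Equiv.Perm.subtypeCongr.left_apply _ _ hxS]
  exact (eS k S T hS hT hTk ⟨x, hxS⟩).2

lemma moveAux_not_mem_bk {x : Fin n} (hxS : x ∈ S) (hx : x ∉ T) :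
    moveAux k S T hS hT hTk x ∉ bk k S hS := by
  rw [moveAux, Equiv.Perm.subtypeCongr.left_apply _ _ hxS]
  have hmem : ¬ ((⟨x, hxS⟩ : ↥S) ∈ inT S T) := by simp [inT, hx]
  rw [eS, subtypeCongr_apply_neg _ _ hmem]
  have := (eOut k S T hS hT hTk ⟨⟨x, hxS⟩, hmem⟩).2
  intro hc
  exact this (by simp only [inB, Finset.mem_filter]; exact ⟨Finset.mem_univ _, hc⟩)

lemma moveAux_fix {x : Fin n} (hx : x ∉ S) : moveAux k S T hS hT hTk x = x := by
  rw [moveAux, Equiv.Perm.subtypeCongr.right_apply _ _ hx]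
  rfl

end Move

def move (S T : Finset (Fin n)) : Equiv.Perm (Fin n) :=
  if h : S.card = 2 * k ∧ T ⊆ S ∧ T.card = k then moveAux k S T h.1 h.2.1 h.2.2
  else Equiv.refl _

lemma move_eq (S T : Finset (Fin n)) (hS : S.card = 2 * k) (hT : T ⊆ S) (hTk : T.card = k) :
    move k S T = moveAux k S T hS hT hTk := dif_pos ⟨hS, hT, hTk⟩


theorem key {V : Type*} [Fintype V] [DecidableEq V] {k : ℕ} (A B : Finset V)
    (hA : A.card = k) (hB : B.card = k) (hAB : Disjoint A B) :
    Nat.factorial (Fintype.card V) ≤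
      (2 * k).choose k * (Finset.univ.filter fun σ : V ≃ Fin (Fintype.card V) =>
        ∀ a ∈ A, ∀ b ∈ B, σ a < σ b).card := by
  classical
  set n := Fintype.card V with hn
  have hcardU : ∀ σ : V ≃ Fin n, ((A ∪ B).image σ).card = 2 * k := fun σ => by
    rw [Finset.card_image_of_injective _ σ.injective, Finset.card_union_of_disjoint hAB,
      hA, hB, two_mul]
  have hsub : ∀ σ : V ≃ Fin n, A.image σ ⊆ (A ∪ B).image σ := fun σ =>
    Finset.image_subset_image Finset.subset_union_left
  have hTc : ∀ σ : V ≃ Fin n, (A.image σ).card = k := fun σ => by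
    rw [Finset.card_image_of_injective _ σ.injective, hA]
  set Φ : (V ≃ Fin n) → (V ≃ Fin n) :=
    fun σ => σ.trans (move k ((A ∪ B).image σ) (A.image σ)) with hΦ
  have hmove : ∀ σ : V ≃ Fin n, move k ((A ∪ B).image σ) (A.image σ)
      = moveAux k ((A ∪ B).image σ) (A.image σ) (hcardU σ) (hsub σ) (hTc σ) := fun σ =>
    move_eq k _ _ _ _ _
  -- S is preserved by Φ
  have hpres : ∀ σ : V ≃ Fin n, (A ∪ B).image (Φ σ) = (A ∪ B).image σ := by
    intro σ
    have h1 : (A ∪ B).image (Φ σ)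
        = ((A ∪ B).image σ).image (move k ((A ∪ B).image σ) (A.image σ)) := by
      rw [Finset.image_image]
      rfl
    rw [h1]
    apply Finset.eq_of_subset_of_card_le
    · intro y hy
      rw [Finset.mem_image] at hy
      obtain ⟨x, hx, rfl⟩ := hy
      rw [hmove σ]
      exact moveAux_mem_S k _ _ _ _ _ hx
    · rw [Finset.card_image_of_injective _ (move k ((A ∪ B).image σ) (A.image σ)).injective]
  have hmapsto : ∀ σ : V ≃ Fin n,
      Φ σ ∈ (Finset.univ.filter fun σ : V ≃ Fin n => ∀ a ∈ A, ∀ b ∈ B, σ a < σ b) := by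
    intro σ
    rw [Finset.mem_filter]
    refine ⟨Finset.mem_univ _, fun a ha b hb => ?_⟩
    have hTa : σ a ∈ A.image σ := Finset.mem_image_of_mem σ ha
    have hSb : σ b ∈ (A ∪ B).image σ :=
      Finset.mem_image_of_mem σ (Finset.mem_union_right _ hb)
    have hTb : σ b ∉ A.image σ := by
      intro hc
      rw [Finset.mem_image] at hc
      obtain ⟨a', ha', he⟩ := hc
      exact Finset.disjoint_left.mp hAB (σ.injective he ▸ ha') hb
    have h1 : Φ σ a ∈ bk k ((A ∪ B).image σ) (hcardU σ) := by
      show move k ((A ∪ B).image σ) (A.image σ) (σ a) ∈ _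
      rw [hmove σ]
      exact moveAux_mem_bk k _ _ _ _ _ hTa
    have h2 : Φ σ b ∈ (A ∪ B).image σ ∧ Φ σ b ∉ bk k ((A ∪ B).image σ) (hcardU σ) := by
      constructor
      · show move k ((A ∪ B).image σ) (A.image σ) (σ b) ∈ _
        rw [hmove σ]
        exact moveAux_mem_S k _ _ _ _ _ hSb
      · show move k ((A ∪ B).image σ) (A.image σ) (σ b) ∉ _
        rw [hmove σ]
        exact moveAux_not_mem_bk k _ _ _ _ _ hSb hTb
    exact bk_lt k _ (hcardU σ) h1 h2.1 h2.2
  have hfiber : ∀ τ ∈ (Finset.univ.filter fun σ : V ≃ Fin n => ∀ a ∈ A, ∀ b ∈ B, σ a < σ b),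
      (Finset.univ.filter fun σ : V ≃ Fin n => Φ σ = τ).card ≤ (2 * k).choose k := by
    intro τ _
    by_cases hfib : (Finset.univ.filter fun σ : V ≃ Fin n => Φ σ = τ).Nonempty
    · obtain ⟨σ₀, hσ₀⟩ := hfib
      have hΦσ₀ : Φ σ₀ = τ := (Finset.mem_filter.mp hσ₀).2
      have hSτ : ((A ∪ B).image τ).card = 2 * k := by
        rw [← hΦσ₀, hpres σ₀]
        exact hcardU σ₀
      have hSeq : ∀ σ : V ≃ Fin n, Φ σ = τ → (A ∪ B).image σ = (A ∪ B).image τ := by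
        intro σ hστ
        rw [← hστ, hpres σ]
      calc (Finset.univ.filter fun σ : V ≃ Fin n => Φ σ = τ).card
          ≤ (Finset.powersetCard k ((A ∪ B).image τ)).card := by
            refine Finset.card_le_card_of_injOn (fun σ => A.image ⇑σ) ?_ ?_
            · intro σ hσ
              have hστ : Φ σ = τ := (Finset.mem_filter.mp hσ).2
              rw [Finset.mem_coe, Finset.mem_powersetCard]
              exact ⟨(hSeq σ hστ) ▸ hsub σ, hTc σ⟩
            · intro σ₁ h₁ σ₂ h₂ heq
              have hστ₁ : Φ σ₁ = τ := (Finset.mem_filter.mp h₁).2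
              have hστ₂ : Φ σ₂ = τ := (Finset.mem_filter.mp h₂).2
              have hm : move k ((A ∪ B).image σ₁) (A.image σ₁)
                  = move k ((A ∪ B).image σ₂) (A.image σ₂) := by
                rw [hSeq σ₁ hστ₁, hSeq σ₂ hστ₂]
                exact congrArg _ heq
              have hrec : ∀ σ : V ≃ Fin n,
                  σ = (Φ σ).trans (move k ((A ∪ B).image σ) (A.image σ)).symm := by
                intro σ
                ext x
                simp [hΦ]
              rw [hrec σ₁, hrec σ₂, hστ₁, hστ₂, hm]
        _ = (2 * k).choose k := by rw [Finset.card_powersetCard, hSτ]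
    · rw [Finset.not_nonempty_iff_eq_empty.mp hfib]
      simp
  calc n.factorial = Fintype.card (V ≃ Fin n) := (Fintype.card_equiv (Fintype.equivFin V)).symm
    _ = (Finset.univ : Finset (V ≃ Fin n)).card := (Finset.card_univ).symm
    _ ≤ (2 * k).choose k * (Finset.univ.filter fun σ : V ≃ Fin n =>
          ∀ a ∈ A, ∀ b ∈ B, σ a < σ b).card :=
        Finset.card_le_mul_card_image_of_maps_to (fun σ _ => hmapsto σ) _ hfiber


lemma swap_sum {Ω β : Type*} [Fintype Ω] (M : Multiset β) (p : Ω → β → Prop)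
    [∀ σ, DecidablePred (p σ)] [∀ A, DecidablePred (fun σ => p σ A)] :
    ∑ σ : Ω, Multiset.card (M.filter (p σ))
      = (M.map fun A => (Finset.univ.filter fun σ => p σ A).card).sum := by
  induction M using Multiset.induction_on with
  | empty => simp
  | cons a M ih =>
    simp only [Multiset.filter_cons, Multiset.card_add, Multiset.map_cons, Multiset.sum_cons,
      Finset.sum_add_distrib, ih, apply_ite Multiset.card, Multiset.card_singleton,
      Multiset.card_zero, Finset.card_filter]

theorem main' {V : Type*} [Fintype V] [DecidableEq V] (k s : ℕ) (hk : 1 ≤ k) (hs : 1 ≤ s)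
    (F : Multiset (Finset V)) (huniform : ∀ A ∈ F, A.card = k)
    (hai : ∀ A ∈ F,
      1 ≤ Multiset.card (F.filter fun B => Disjoint A B) ∧
      Multiset.card (F.filter fun B => Disjoint A B) ≤ s) :
    Multiset.card F ≤ s * Nat.choose (2 * k) k := by
  classical
  set n := Fintype.card V with hn
  set good : (V ≃ Fin n) → Finset V → Prop :=
    fun σ A => ∃ B ∈ F, Disjoint A B ∧ ∀ a ∈ A, ∀ b ∈ B, σ a < σ b with hgood
  -- upper bound for each ordering
  have hupper : ∀ σ : V ≃ Fin n, Multiset.card (F.filter (good σ)) ≤ s := by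
    intro σ
    by_cases h0 : F.filter (good σ) = 0
    · rw [h0]; simp
    · obtain ⟨A₀, hA₀⟩ := Multiset.exists_mem_of_ne_zero h0
      rw [Multiset.mem_filter] at hA₀
      obtain ⟨hA₀F, B₀, hB₀F, hd₀, ho₀⟩ := hA₀
      set W := (F.filter fun Bb =>
        ∃ Aa, Disjoint Aa Bb ∧ ∀ a ∈ Aa, ∀ b ∈ Bb, σ a < σ b).toFinset with hW
      have hWne : W.Nonempty := ⟨B₀, by
        rw [hW, Multiset.mem_toFinset, Multiset.mem_filter]
        exact ⟨hB₀F, A₀, hd₀, ho₀⟩⟩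
      obtain ⟨Bs, hBsW, hminBs⟩ :=
        Finset.exists_min_image W (fun Bb => Bb.sup fun b => n - (σ b : ℕ)) hWne
      rw [hW, Multiset.mem_toFinset, Multiset.mem_filter] at hBsW
      have hclaim : ∀ Aa, good σ Aa → Disjoint Bs Aa := by
        rintro Aa ⟨Bb, hBbF, hdis, hord⟩
        have hBbW : Bb ∈ W := by
          rw [hW, Multiset.mem_toFinset, Multiset.mem_filter]
          exact ⟨hBbF, Aa, hdis, hord⟩
        have hle : (Bs.sup fun b => n - (σ b : ℕ)) ≤ Bb.sup fun b => n - (σ b : ℕ) :=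
          hminBs Bb hBbW
        have hBbne : Bb.Nonempty := Finset.card_pos.mp (by rw [huniform Bb hBbF]; omega)
        obtain ⟨b₁, hb₁, hsup⟩ := Finset.exists_mem_eq_sup Bb hBbne (fun b => n - (σ b : ℕ))
        rw [Finset.disjoint_left]
        intro a haBs haAa
        have h2 : (n : ℕ) - (σ a : ℕ) ≤ n - (σ b₁ : ℕ) :=
          le_trans (Finset.le_sup (f := fun b => n - (σ b : ℕ)) haBs) (hsup ▸ hle)
        have h4 : ((σ a : Fin n) : ℕ) < ((σ b₁ : Fin n) : ℕ) :=
          Fin.lt_def.mp (hord a haAa b₁ hb₁)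
        have h5 : ((σ a : Fin n) : ℕ) < n := (σ a).isLt
        have h6 : ((σ b₁ : Fin n) : ℕ) < n := (σ b₁).isLt
        omega
      calc Multiset.card (F.filter (good σ))
          ≤ Multiset.card (F.filter fun Bb => Disjoint Bs Bb) :=
            Multiset.card_le_card (Multiset.monotone_filter_right F
              (fun Aa hAa => hclaim Aa hAa))
        _ ≤ s := (hai Bs hBsW.1).2
  -- lower bound for each edge
  have hlower : ∀ A ∈ F, n.factorial
      ≤ (2 * k).choose k * (Finset.univ.filter fun σ : V ≃ Fin n => good σ A).card := by
    intro A hA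
    have h1 : F.filter (fun B => Disjoint A B) ≠ 0 := by
      intro hc
      have := (hai A hA).1
      rw [hc] at this
      simp at this
    obtain ⟨B, hBmem⟩ := Multiset.exists_mem_of_ne_zero h1
    rw [Multiset.mem_filter] at hBmem
    obtain ⟨hBF, hdisj⟩ := hBmem
    refine (key A B (huniform A hA) (huniform B hBF) hdisj).trans
      (Nat.mul_le_mul_left _ (Finset.card_le_card ?_))
    intro σ hσ
    rw [Finset.mem_filter] at hσ ⊢
    exact ⟨hσ.1, B, hBF, hdisj, hσ.2⟩
  -- combine
  have hcardΩ : (Finset.univ : Finset (V ≃ Fin n)).card = n.factorial := by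
    rw [Finset.card_univ]
    exact Fintype.card_equiv (Fintype.equivFin V)
  have h1 : Multiset.card F * n.factorial ≤ ((2 * k).choose k * s) * n.factorial := by
    calc Multiset.card F * n.factorial = (F.map fun _ => n.factorial).sum := by
          rw [Multiset.map_const', Multiset.sum_replicate, smul_eq_mul]
      _ ≤ (F.map fun A =>
            (2 * k).choose k * (Finset.univ.filter fun σ : V ≃ Fin n => good σ A).card).sum :=
          Multiset.sum_map_le_sum_map _ _ hlower
      _ = (2 * k).choose k * (F.map fun A =>
            (Finset.univ.filter fun σ : V ≃ Fin n => good σ A).card).sum :=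
          Multiset.sum_map_mul_left
      _ = (2 * k).choose k * ∑ σ : V ≃ Fin n, Multiset.card (F.filter (good σ)) := by
          rw [← swap_sum F good]
      _ ≤ (2 * k).choose k * ∑ _σ : V ≃ Fin n, s :=
          Nat.mul_le_mul_left _ (Finset.sum_le_sum fun σ _ => hupper σ)
      _ = ((2 * k).choose k * s) * n.factorial := by
          rw [Finset.sum_const, hcardΩ, smul_eq_mul, mul_assoc, Nat.mul_comm n.factorial s]
  have := Nat.le_of_mul_le_mul_right h1 (Nat.factorial_pos n)
  rwa [Nat.mul_comm] at this

end
end AX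

/-- For every integer `k ≥ 1` and `s ≥ 1`, any `k`-uniform
`[1,s]`-almost intersecting multihypergraph has at most `s * (2k choose k)` edges
(counted with multiplicity). -/
theorem stmt_0 {α : Type*} [DecidableEq α] (k s : ℕ) (hk : 1 ≤ k) (hs : 1 ≤ s)
    (F : Multiset (Finset α))
    (huniform : ∀ A ∈ F, A.card = k)
    (hai : ∀ A ∈ F,
      1 ≤ Multiset.card (F.filter fun B => Disjoint A B) ∧
      Multiset.card (F.filter fun B => Disjoint A B) ≤ s) :
    Multiset.card F ≤ s * Nat.choose (2 * k) k := by
  classical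
  set V : Finset α := F.toFinset.sup id with hV
  have hsub : ∀ A ∈ F, A ⊆ V := fun A hA =>
    Finset.le_sup (f := id) (Multiset.mem_toFinset.mpr hA)
  set f : Finset α → Finset ↥V := fun A => A.subtype fun x => x ∈ V with hf
  have hcardf : ∀ A ∈ F, (f A).card = A.card := by
    intro A hA
    rw [hf]
    simp only
    rw [Finset.card_subtype, Finset.filter_true_of_mem (fun x hx => hsub A hA hx)]
  have hdisjf : ∀ A ∈ F, ∀ B ∈ F, (Disjoint (f A) (f B) ↔ Disjoint A B) := by
    intro A hA B hB
    constructor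
    · intro h
      rw [Finset.disjoint_left] at h ⊢
      intro a haA haB
      exact h (a := ⟨a, hsub A hA haA⟩) (Finset.mem_subtype.mpr haA)
        (Finset.mem_subtype.mpr haB)
    · intro h
      rw [Finset.disjoint_left] at h ⊢
      intro x hxA hxB
      exact h (Finset.mem_subtype.mp hxA) (Finset.mem_subtype.mp hxB)
  have hcard' : Multiset.card (F.map f) = Multiset.card F := Multiset.card_map f F
  rw [← hcard']
  apply AX.main' k s hk hs (F.map f)
  · intro A' hA'
    obtain ⟨A, hA, rfl⟩ := Multiset.mem_map.mp hA'
    rw [hcardf A hA]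
    exact huniform A hA
  · intro A' hA'
    obtain ⟨A, hA, rfl⟩ := Multiset.mem_map.mp hA'
    have h1 : (F.map f).filter (fun B' => Disjoint (f A) B')
        = (F.filter fun B => Disjoint (f A) (f B)).map f := by
      rw [Multiset.filter_map]
      rfl
    have h2 : (F.filter fun B => Disjoint (f A) (f B)) = (F.filter fun B => Disjoint A B) :=
      Multiset.filter_congr (fun B hB => hdisjf A hA B hB)
    rw [h1, h2, Multiset.card_map]
    exact hai A hA
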